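/- For every positive integer n, the pairs (2n, 3n) and (2n, 5n) are tame: for every c > 3n (resp. c > 5n) there exists a tame polynomial automorphism of C^3 with multidegree (2n, 3n, c) (resp. (2n, 5n, c)). -/
import Mathlib


open MvPolynomial Finset

/-- A polynomial map `ℂ^n → ℂ^n`, given by its coordinate polynomials. -/
abbrev PolyMap (n : ℕ) := Fin n → MvPolynomial (Fin n) ℂ

/-- Composition of polynomial maps: `(compPM F G) = F ∘ G`. -/
noncomputable def compPM {n : ℕ} (F G : PolyMap n) : PolyMap n :=
  fun i => aeval G (F i)

/-- The identity polynomial map. -/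
noncomputable def idPM (n : ℕ) : PolyMap n := fun i => X i

/-- `F` is a polynomial automorphism: it has a polynomial inverse. -/
def IsPolyAut {n : ℕ} (F : PolyMap n) : Prop :=
  ∃ G : PolyMap n, compPM F G = idPM n ∧ compPM G F = idPM n

/-- `F` is elementary: it changes one coordinate `j` by adding a polynomial
not involving the variable `j`. -/
def IsElementaryPM {n : ℕ} (F : PolyMap n) : Prop :=
  ∃ (j : Fin n) (g : MvPolynomial (Fin n) ℂ),
    degreeOf j g = 0 ∧ F j = X j + g ∧ ∀ i, i ≠ j → F i = X i

/-- `F` is a linear (degree ≤ 1) automorphism. -/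
def IsLinearPM {n : ℕ} (F : PolyMap n) : Prop :=
  IsPolyAut F ∧ ∀ i, (F i).totalDegree ≤ 1

/-- `F` is tame: a composition of linear and elementary automorphisms. -/
inductive IsTamePM : {n : ℕ} → PolyMap n → Prop
  | lin {n} (F : PolyMap n) : IsLinearPM F → IsTamePM F
  | elem {n} (F : PolyMap n) : IsElementaryPM F → IsTamePM F
  | comp {n} (F G : PolyMap n) : IsTamePM F → IsTamePM G → IsTamePM (compPM F G)

/-- The multidegree of a polynomial map of `ℂ^3`. -/
noncomputable def mdeg3 (F : PolyMap 3) : ℕ × ℕ × ℕ :=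
  ((F 0).totalDegree, (F 1).totalDegree, (F 2).totalDegree)

abbrev P3 := MvPolynomial (Fin 3) ℂ

lemma aeval_comp₃ (G H : PolyMap 3) (p : P3) :
    aeval H (aeval G p) = aeval (fun j => aeval H (G j)) p := by
  induction p using MvPolynomial.induction_on with
  | C a => rw [aeval_C, aeval_C]; exact (aeval H).commutes a
  | add p q hp hq => simp only [map_add, hp, hq]
  | mul_X p i hp => simp only [map_mul, aeval_X, hp]

lemma compPM_assoc (F G H : PolyMap 3) : compPM (compPM F G) H = compPM F (compPM G H) := by
  funext i
  simp only [compPM]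
  exact aeval_comp₃ G H (F i)

lemma compPM_id_left (F : PolyMap 3) : compPM (idPM 3) F = F := by
  funext i; simp [compPM, idPM]

lemma compPM_id_right (F : PolyMap 3) : compPM F (idPM 3) = F := by
  funext i
  show aeval (fun i => X i) (F i) = F i
  exact aeval_X_left_apply (F i)

lemma IsPolyAut.compPM_closed {F G : PolyMap 3} (hF : IsPolyAut F) (hG : IsPolyAut G) :
    IsPolyAut (compPM F G) := by
  obtain ⟨F', hF1, hF2⟩ := hF
  obtain ⟨G', hG1, hG2⟩ := hG
  refine ⟨compPM G' F', ?_, ?_⟩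
  · rw [compPM_assoc, ← compPM_assoc G G', hG1, compPM_id_left, hF1]
  · rw [compPM_assoc, ← compPM_assoc F' F, hF2, compPM_id_left, hG2]

lemma aeval_fix {j : Fin 3} {g : P3} (hg : degreeOf j g = 0) {G : PolyMap 3}
    (hG : ∀ i, i ≠ j → G i = X i) : aeval G g = g := by
  have hv : ∀ i, i ∈ g.vars → i ∈ g.vars → G i = X i := by
    intro i hi _
    rcases eq_or_ne i j with rfl | h
    · exfalso
      obtain ⟨m, hm, him⟩ := (mem_vars i).1 hi
      have h1 : m i ≤ 0 := by
        have := degreeOf_le_iff.1 (le_of_eq hg) m hm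
        exact this
      have h2 : m i ≠ 0 := Finsupp.mem_support_iff.1 him
      omega
    · exact hG i h
  have : aeval G g = eval₂Hom (algebraMap ℂ P3) G g := rfl
  rw [this, eval₂Hom_congr' rfl hv rfl]
  exact aeval_X_left_apply g

noncomputable def elemMap (j : Fin 3) (g : P3) : PolyMap 3 :=
  Function.update (idPM 3) j (X j + g)

lemma elemMap_same (j : Fin 3) (g : P3) : elemMap j g j = X j + g :=
  Function.update_self j _ _

lemma elemMap_ne {i j : Fin 3} (g : P3) (h : i ≠ j) : elemMap j g i = X i := by
  rw [elemMap, Function.update_of_ne h]; rfl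

lemma elemMap_zero (j : Fin 3) : elemMap j 0 = idPM 3 := by
  funext i
  rcases eq_or_ne i j with rfl | h
  · rw [elemMap_same, add_zero]; rfl
  · rw [elemMap_ne _ h]; rfl

lemma elemMap_isElem {j : Fin 3} {g : P3} (hg : degreeOf j g = 0) :
    IsElementaryPM (elemMap j g) :=
  ⟨j, g, hg, elemMap_same j g, fun _ h => elemMap_ne g h⟩

lemma compPM_elem_add {j : Fin 3} {u : P3} (hu : degreeOf j u = 0) (v : P3) :
    compPM (elemMap j u) (elemMap j v) = elemMap j (v + u) := by
  funext i
  rcases eq_or_ne i j with rfl | h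
  · show aeval (elemMap i v) (elemMap i u i) = _
    rw [elemMap_same, elemMap_same, map_add, aeval_X, elemMap_same,
      aeval_fix hu (fun l hl => elemMap_ne v hl)]
    ring
  · show aeval (elemMap j v) (elemMap j u i) = _
    rw [elemMap_ne u h, aeval_X, elemMap_ne v h, elemMap_ne _ h]

lemma elemMap_isAut {j : Fin 3} {g : P3} (hg : degreeOf j g = 0) :
    IsPolyAut (elemMap j g) := by
  have hg' : degreeOf j (-g) = 0 := by rw [degreeOf_neg]; exact hg
  refine ⟨elemMap j (-g), ?_, ?_⟩
  · rw [compPM_elem_add hg, neg_add_cancel, elemMap_zero]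
  · rw [compPM_elem_add hg', add_neg_cancel, elemMap_zero]

-- degreeOf-zero helpers
lemma dz_add {i : Fin 3} {p q : P3} (hp : degreeOf i p = 0) (hq : degreeOf i q = 0) :
    degreeOf i (p + q) = 0 := by
  have := degreeOf_add_le i p q; omega

lemma dz_sub {i : Fin 3} {p q : P3} (hp : degreeOf i p = 0) (hq : degreeOf i q = 0) :
    degreeOf i (p - q) = 0 := by
  have h := degreeOf_sub_le i p q; omega

lemma dz_mul {i : Fin 3} {p q : P3} (hp : degreeOf i p = 0) (hq : degreeOf i q = 0) :
    degreeOf i (p * q) = 0 := by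
  have := degreeOf_mul_le i p q; omega

lemma dz_pow {i : Fin 3} {p : P3} (hp : degreeOf i p = 0) (k : ℕ) :
    degreeOf i (p ^ k) = 0 := by
  have h := degreeOf_pow_le i p k
  rw [hp, Nat.mul_zero] at h
  omega

lemma dz_X {i j : Fin 3} (h : i ≠ j) : degreeOf i (X j : P3) = 0 := by
  rw [degreeOf_X]; simp [h]

lemma dz_ofNat (i : Fin 3) (m : ℕ) [m.AtLeastTwo] :
    degreeOf i (OfNat.ofNat m : P3) = 0 := by
  rw [← map_ofNat (C : ℂ →+* P3) m]
  exact degreeOf_C _ _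

-- totalDegree upper bound helpers
lemma tdle_add {p q : P3} {m : ℕ} (hp : p.totalDegree ≤ m) (hq : q.totalDegree ≤ m) :
    (p + q).totalDegree ≤ m :=
  le_trans (totalDegree_add p q) (max_le hp hq)

lemma tdle_sub {p q : P3} {m : ℕ} (hp : p.totalDegree ≤ m) (hq : q.totalDegree ≤ m) :
    (p - q).totalDegree ≤ m := by
  rw [sub_eq_add_neg]
  exact tdle_add hp (by rwa [totalDegree_neg])

lemma tdle_mul {p q : P3} {m l : ℕ} (hp : p.totalDegree ≤ m) (hq : q.totalDegree ≤ l) :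
    (p * q).totalDegree ≤ m + l :=
  le_trans (totalDegree_mul p q) (add_le_add hp hq)

lemma tdle_pow {p : P3} {m : ℕ} (hp : p.totalDegree ≤ m) (k : ℕ) :
    (p ^ k).totalDegree ≤ k * m :=
  le_trans (totalDegree_pow p k) (Nat.mul_le_mul_left k hp)

lemma tdle_ofNat (m : ℕ) [m.AtLeastTwo] : (OfNat.ofNat m : P3).totalDegree = 0 := by
  rw [← map_ofNat (C : ℂ →+* P3) m]
  exact totalDegree_C _

lemma tdle_X (i : Fin 3) : (X i : P3).totalDegree ≤ 1 :=
  le_of_eq (totalDegree_X i)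

lemma tdle_X_pow (i : Fin 3) (k : ℕ) : ((X i : P3) ^ k).totalDegree ≤ k := by
  have := tdle_pow (le_of_eq (totalDegree_X (R := ℂ) i)) k (p := X i)
  omega

-- univariate natDegree helper
lemma ndh (p : Polynomial ℂ) (A : ℂ) (hA : A ≠ 0) (K : ℕ) (h : p.natDegree < K) :
    (p + Polynomial.C A * Polynomial.X ^ K).natDegree = K ∧
      p + Polynomial.C A * Polynomial.X ^ K ≠ 0 := by
  have hK : (Polynomial.C A * Polynomial.X ^ K : Polynomial ℂ).natDegree = K :=
    Polynomial.natDegree_C_mul_X_pow K A hA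
  constructor
  · rw [Polynomial.natDegree_add_eq_right_of_natDegree_lt (by omega), hK]
  · intro h0
    have hc : (p + Polynomial.C A * Polynomial.X ^ K).coeff K = A := by
      rw [Polynomial.coeff_add, Polynomial.coeff_eq_zero_of_natDegree_lt h,
        Polynomial.coeff_C_mul, Polynomial.coeff_X_pow, if_pos rfl]
      ring
    rw [h0, Polynomial.coeff_zero] at hc
    exact hA hc.symm

lemma natDegree_aeval_le (g : Fin 3 → Polynomial ℂ) (hg : ∀ i, (g i).natDegree ≤ 1)
    (p : P3) : (aeval g p).natDegree ≤ p.totalDegree := by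
  rw [aeval_def, eval₂_eq]
  apply Polynomial.natDegree_sum_le_of_forall_le
  intro m hm
  refine le_trans Polynomial.natDegree_mul_le ?_
  have h1 : ((algebraMap ℂ (Polynomial ℂ)) (coeff m p)).natDegree = 0 := by
    rw [Polynomial.algebraMap_eq]
    exact Polynomial.natDegree_C _
  have h2 : (∏ i ∈ m.support, g i ^ m i).natDegree ≤ ∑ i ∈ m.support, m i := by
    refine le_trans (Polynomial.natDegree_prod_le _ _) ?_
    apply Finset.sum_le_sum
    intro i _
    refine le_trans Polynomial.natDegree_pow_le ?_
    have := hg i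
    calc m i * (g i).natDegree ≤ m i * 1 := Nat.mul_le_mul_left _ (hg i)
      _ = m i := Nat.mul_one _
  have h3 : ∑ i ∈ m.support, m i ≤ p.totalDegree := by
    have h4 := le_totalDegree hm
    simpa [Finsupp.sum] using h4
  omega

lemma master (gA gB gC : P3)
    (dA0 : degreeOf 0 gA = 0) (dA1 : degreeOf 1 gA = 0)
    (dB1 : degreeOf 1 gB = 0) (dC2 : degreeOf 2 gC = 0) :
    ∃ F : PolyMap 3, IsTamePM F ∧ IsPolyAut F ∧
      F 0 = X 0 + gA ∧ F 1 = X 1 + gB ∧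
      F 2 = X 2 + aeval ![X 0 + gA, X 1 + gB, X 2] gC := by
  set G : PolyMap 3 := compPM (elemMap 0 gA) (elemMap 1 gB) with hGdef
  have hG0 : G 0 = X 0 + gA := by
    show aeval (elemMap 1 gB) (elemMap 0 gA 0) = _
    rw [elemMap_same, map_add, aeval_X, elemMap_ne gB (by decide),
      aeval_fix dA1 (fun l hl => elemMap_ne gB hl)]
  have hG1 : G 1 = X 1 + gB := by
    show aeval (elemMap 1 gB) (elemMap 0 gA 1) = _
    rw [elemMap_ne gA (by decide), aeval_X, elemMap_same]
  have hG2 : G 2 = X 2 := by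
    show aeval (elemMap 1 gB) (elemMap 0 gA 2) = _
    rw [elemMap_ne gA (by decide), aeval_X, elemMap_ne gB (by decide)]
  have hGfun : G = ![X 0 + gA, X 1 + gB, X 2] := by
    funext i
    fin_cases i
    · exact hG0
    · exact hG1
    · exact hG2
  refine ⟨compPM (elemMap 2 gC) G, ?_, ?_, ?_, ?_, ?_⟩
  · exact IsTamePM.comp _ _ (IsTamePM.elem _ (elemMap_isElem dC2))
      (IsTamePM.comp _ _ (IsTamePM.elem _ (elemMap_isElem dA0))
        (IsTamePM.elem _ (elemMap_isElem dB1)))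
  · exact (elemMap_isAut dC2).compPM_closed
      ((elemMap_isAut dA0).compPM_closed (elemMap_isAut dB1))
  · show aeval G (elemMap 2 gC 0) = _
    rw [elemMap_ne gC (by decide), aeval_X, hG0]
  · show aeval G (elemMap 2 gC 1) = _
    rw [elemMap_ne gC (by decide), aeval_X, hG1]
  · show aeval G (elemMap 2 gC 2) = _
    rw [elemMap_same, map_add, aeval_X, hG2, hGfun]

lemma sum23 (m : ℕ) (hm : m ≠ 1) : ∃ a b : ℕ, m = 2*a + 3*b := by
  rcases Nat.even_or_odd m with ⟨t, ht⟩ | ⟨t, ht⟩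
  · exact ⟨t, 0, by omega⟩
  · exact ⟨t - 1, 1, by omega⟩

lemma sum25 (m : ℕ) (h1 : m ≠ 1) (h3 : m ≠ 3) : ∃ a b : ℕ, m = 2*a + 5*b := by
  rcases Nat.even_or_odd m with ⟨t, ht⟩ | ⟨t, ht⟩
  · exact ⟨t, 0, by omega⟩
  · exact ⟨t - 2, 1, by omega⟩

lemma arith1 (n c : ℕ) (hn : 1 ≤ n) (hc : 3*n < c) :
    ∃ k d a b : ℕ, (k = 0 ∨ (k = 1 ∧ 2 ≤ n)) ∧ d + 2 ≤ 3*n ∧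
      c = k*(3*n+d+1) + 2*n*a + 3*n*b := by
  obtain ⟨q, r, hdm, hrn⟩ : ∃ q r, n*q + r = c - 3*n ∧ r < n :=
    ⟨(c-3*n)/n, (c-3*n)%n, Nat.div_add_mod _ n, Nat.mod_lt _ (by omega)⟩
  have hcs : c - 3*n + 3*n = c := Nat.sub_add_cancel (le_of_lt hc)
  by_cases hr : r = 0
  · obtain ⟨a, b, hab⟩ := sum23 (3 + q) (by omega)
    refine ⟨0, 0, a, b, Or.inl rfl, by omega, ?_⟩
    calc c = (c - 3*n) + 3*n := hcs.symm
      _ = n*q + r + 3*n := by rw [hdm]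
      _ = n*(3+q) := by rw [hr]; ring
      _ = n*(2*a+3*b) := by rw [← hab]
      _ = 0*(3*n+0+1) + 2*n*a + 3*n*b := by ring
  · have hn2 : 2 ≤ n := by omega
    by_cases hq1 : q = 1
    · refine ⟨1, n + r - 1, 0, 0, Or.inr ⟨rfl, hn2⟩, by omega, ?_⟩
      rw [hq1] at hdm
      omega
    · obtain ⟨a, b, hab⟩ := sum23 q hq1
      refine ⟨1, r - 1, a, b, Or.inr ⟨rfl, hn2⟩, by omega, ?_⟩
      calc c = (c - 3*n) + 3*n := hcs.symm
        _ = n*q + r + 3*n := by rw [hdm]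
        _ = n*(2*a+3*b) + r + 3*n := by rw [← hab]
        _ = 1*(3*n + (r-1) + 1) + 2*n*a + 3*n*b := by
            rw [show 3*n + (r-1) + 1 = 3*n + r by omega]; ring

lemma arith2 (n c : ℕ) (hn : 1 ≤ n) (hc : 5*n < c) :
    ∃ k d a b : ℕ, (k = 0 ∨ (k = 1 ∧ 2 ≤ n)) ∧ d + 2 ≤ 2*n ∧
      c = k*(5*n+d+1) + 2*n*a + 5*n*b := by
  obtain ⟨q, r, hdm, hrn⟩ : ∃ q r, n*q + r = c - 5*n ∧ r < n :=
    ⟨(c-5*n)/n, (c-5*n)%n, Nat.div_add_mod _ n, Nat.mod_lt _ (by omega)⟩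
  have hcs : c - 5*n + 5*n = c := Nat.sub_add_cancel (le_of_lt hc)
  by_cases hr : r = 0
  · obtain ⟨a, b, hab⟩ := sum25 (5 + q) (by omega) (by omega)
    refine ⟨0, 0, a, b, Or.inl rfl, by omega, ?_⟩
    calc c = (c - 5*n) + 5*n := hcs.symm
      _ = n*q + r + 5*n := by rw [hdm]
      _ = n*(5+q) := by rw [hr]; ring
      _ = n*(2*a+5*b) := by rw [← hab]
      _ = 0*(5*n+0+1) + 2*n*a + 5*n*b := by ring
  · have hn2 : 2 ≤ n := by omega
    by_cases hq13 : q = 1 ∨ q = 3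
    · obtain ⟨a, b, hab⟩ := sum25 (q - 1) (by omega) (by omega)
      refine ⟨1, n + r - 1, a, b, Or.inr ⟨rfl, hn2⟩, by omega, ?_⟩
      have hq' : q = 1 + (2*a+5*b) := by omega
      calc c = (c - 5*n) + 5*n := hcs.symm
        _ = n*q + r + 5*n := by rw [hdm]
        _ = n*(1 + (2*a+5*b)) + r + 5*n := by rw [← hq']
        _ = 1*(5*n + (n + r - 1) + 1) + 2*n*a + 5*n*b := by
            rw [show 5*n + (n+r-1) + 1 = 5*n + (n+r) by omega]; ring
    · obtain ⟨a, b, hab⟩ := sum25 q (by omega) (by omega)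
      refine ⟨1, r - 1, a, b, Or.inr ⟨rfl, hn2⟩, by omega, ?_⟩
      calc c = (c - 5*n) + 5*n := hcs.symm
        _ = n*q + r + 5*n := by rw [hdm]
        _ = n*(2*a+5*b) + r + 5*n := by rw [← hab]
        _ = 1*(5*n + (r-1) + 1) + 2*n*a + 5*n*b := by
            rw [show 5*n + (r-1) + 1 = 5*n + r by omega]; ring

noncomputable def sb : Fin 3 → Polynomial ℂ := ![Polynomial.X, 0, Polynomial.X]

lemma sb_deg : ∀ i, (sb i).natDegree ≤ 1 := by
  intro i
  fin_cases i <;> simp [sb]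

lemma td_lower (p : P3) : (aeval sb p).natDegree ≤ p.totalDegree :=
  natDegree_aeval_le sb sb_deg p

lemma case23 (n c : ℕ) (hn : 1 ≤ n) (hc : 3*n < c) :
    ∃ F : PolyMap 3, IsTamePM F ∧ IsPolyAut F ∧ mdeg3 F = (2*n, 3*n, c) := by
  obtain ⟨k, d, a, b, hk, hd, hceq⟩ := arith1 n c hn hc
  have dA0 : degreeOf 0 ((4 : P3) * X 2 ^ (2*n)) = 0 :=
    dz_mul (dz_ofNat 0 4) (dz_pow (dz_X (by decide)) _)
  have dA1 : degreeOf 1 ((4 : P3) * X 2 ^ (2*n)) = 0 :=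
    dz_mul (dz_ofNat 1 4) (dz_pow (dz_X (by decide)) _)
  have dB1 : degreeOf 1 ((8 : P3) * X 2 ^ (3*n) + 3 * X 2 ^ n * X 0 + X 0 * X 2 ^ d) = 0 :=
    dz_add (dz_add (dz_mul (dz_ofNat 1 8) (dz_pow (dz_X (by decide)) _))
      (dz_mul (dz_mul (dz_ofNat 1 3) (dz_pow (dz_X (by decide)) _)) (dz_X (by decide))))
      (dz_mul (dz_X (by decide)) (dz_pow (dz_X (by decide)) _))
  have dC2 : degreeOf 2 ((((X 1 : P3))^2 - (X 0 : P3)^3)^k * X 0 ^ a * X 1 ^ b) = 0 :=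
    dz_mul (dz_mul (dz_pow (dz_sub (dz_pow (dz_X (by decide)) _)
      (dz_pow (dz_X (by decide)) _)) _) (dz_pow (dz_X (by decide)) _))
      (dz_pow (dz_X (by decide)) _)
  obtain ⟨F, hTame, hAut, hF0, hF1, hF2⟩ := master _ _ _ dA0 dA1 dB1 dC2
  set f1 : P3 := X 0 + (4 : P3) * X 2 ^ (2*n) with hf1
  set f2 : P3 := X 1 + ((8 : P3) * X 2 ^ (3*n) + 3 * X 2 ^ n * X 0 + X 0 * X 2 ^ d) with hf2
  set q : P3 := (f2^2 - f1^3)^k * f1^a * f2^b with hq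
  have hqc : aeval ![f1, f2, X 2] ((((X 1 : P3))^2 - (X 0 : P3)^3)^k * X 0 ^ a * X 1 ^ b) = q := by
    simp only [map_mul, map_pow, map_sub, aeval_X, hq]
    norm_num [Matrix.cons_val_zero, Matrix.cons_val_one, Matrix.head_cons]
  rw [hqc] at hF2
  -- expansion of f2^2 - f1^3
  have hexp : f2^2 - f1^3 =
      X 1^2 - 3 * X 0^2 * X 2^(2*n) + X 0^2 * X 2^(2*d) + 16 * X 1 * X 2^(3*n)
        + 6 * X 1 * X 2^n * X 0 + 2 * X 1 * X 0 * X 2^d + 16 * X 0 * X 2^(3*n+d)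
        + 6 * X 0^2 * X 2^(n+d) - X 0^3 := by
    rw [hf1, hf2]; ring
  -- total degree upper bounds
  have hf1ub : f1.totalDegree ≤ 2*n := by
    refine tdle_add (le_trans (tdle_X 0) (by omega)) ?_
    exact le_trans (tdle_mul (le_of_eq (tdle_ofNat 4)) (tdle_X_pow 2 (2*n))) (by omega)
  have hf2ub : f2.totalDegree ≤ 3*n := by
    refine tdle_add (le_trans (tdle_X 1) (by omega))
      (tdle_add (tdle_add ?_ ?_) ?_)
    · exact le_trans (tdle_mul (le_of_eq (tdle_ofNat 8)) (tdle_X_pow 2 (3*n))) (by omega)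
    · exact le_trans (tdle_mul (tdle_mul (le_of_eq (tdle_ofNat 3)) (tdle_X_pow 2 n)) (tdle_X 0))
        (by omega)
    · exact le_trans (tdle_mul (tdle_X 0) (tdle_X_pow 2 d)) (by omega)
  have hhub : (f2^2 - f1^3).totalDegree ≤ 3*n+d+1 := by
    rw [hexp]
    refine tdle_sub (tdle_add (tdle_add (tdle_add (tdle_add (tdle_add
      (tdle_add (tdle_sub ?_ ?_) ?_) ?_) ?_) ?_) ?_) ?_) ?_
    · exact le_trans (tdle_X_pow 1 2) (by omega)
    · exact le_trans (tdle_mul (tdle_mul (le_of_eq (tdle_ofNat 3)) (tdle_X_pow 0 2))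
        (tdle_X_pow 2 (2*n))) (by omega)
    · exact le_trans (tdle_mul (tdle_X_pow 0 2) (tdle_X_pow 2 (2*d))) (by omega)
    · exact le_trans (tdle_mul (tdle_mul (le_of_eq (tdle_ofNat 16)) (tdle_X 1))
        (tdle_X_pow 2 (3*n))) (by omega)
    · exact le_trans (tdle_mul (tdle_mul (tdle_mul (le_of_eq (tdle_ofNat 6)) (tdle_X 1))
        (tdle_X_pow 2 n)) (tdle_X 0)) (by omega)
    · exact le_trans (tdle_mul (tdle_mul (tdle_mul (le_of_eq (tdle_ofNat 2)) (tdle_X 1))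
        (tdle_X 0)) (tdle_X_pow 2 d)) (by omega)
    · exact le_trans (tdle_mul (tdle_mul (le_of_eq (tdle_ofNat 16)) (tdle_X 0))
        (tdle_X_pow 2 (3*n+d))) (by omega)
    · exact le_trans (tdle_mul (tdle_mul (le_of_eq (tdle_ofNat 6)) (tdle_X_pow 0 2))
        (tdle_X_pow 2 (n+d))) (by omega)
    · exact le_trans (tdle_X_pow 0 3) (by omega)
  have hqub : q.totalDegree ≤ c := by
    refine le_trans (tdle_mul (tdle_mul (tdle_pow hhub k) (tdle_pow hf1ub a)) (tdle_pow hf2ub b))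
      (le_of_eq ?_)
    rw [hceq]; ring
  -- univariate specializations
  have hp1 : aeval sb f1 = Polynomial.X + Polynomial.C (4:ℂ) * Polynomial.X ^ (2*n) := by
    simp [hf1, sb, map_ofNat]
  have hn1 := ndh Polynomial.X 4 (by norm_num) (2*n) (by rw [Polynomial.natDegree_X]; omega)
  have hf1deg : f1.totalDegree = 2*n := by
    refine le_antisymm hf1ub ?_
    have := td_lower f1
    rw [hp1, hn1.1] at this
    exact this
  have hf1ne : aeval sb f1 ≠ 0 := by rw [hp1]; exact hn1.2
  have hp2 : aeval sb f2 = (Polynomial.C (3:ℂ) * Polynomial.X ^ (n+1) + Polynomial.X ^ (d+1))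
      + Polynomial.C (8:ℂ) * Polynomial.X ^ (3*n) := by
    simp [hf2, sb, map_ofNat]
    ring
  have hn2 := ndh (Polynomial.C (3:ℂ) * Polynomial.X ^ (n+1) + Polynomial.X ^ (d+1)) 8
    (by norm_num) (3*n) (by
      have h1 : (Polynomial.C (3:ℂ) * Polynomial.X ^ (n+1)).natDegree ≤ n+1 :=
        Polynomial.natDegree_C_mul_X_pow_le _ _
      have h2 : ((Polynomial.X : Polynomial ℂ) ^ (d+1)).natDegree ≤ d+1 := by
        rw [Polynomial.natDegree_X_pow]
      have := Polynomial.natDegree_add_le (Polynomial.C (3:ℂ) * Polynomial.X ^ (n+1))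
        (Polynomial.X ^ (d+1))
      omega)
  have hf2deg : f2.totalDegree = 3*n := by
    refine le_antisymm hf2ub ?_
    have := td_lower f2
    rw [hp2, hn2.1] at this
    exact this
  have hf2ne : aeval sb f2 ≠ 0 := by rw [hp2]; exact hn2.2
  -- q degree
  have hqdeg : (aeval sb q).natDegree = c ∧ aeval sb q ≠ 0 := by
    have hfa : (aeval sb f1 ^ a).natDegree = a * (2*n) := by
      rw [Polynomial.natDegree_pow, hp1, hn1.1]
    have hfb : (aeval sb f2 ^ b).natDegree = b * (3*n) := by
      rw [Polynomial.natDegree_pow, hp2, hn2.1]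
    have hfane : aeval sb f1 ^ a ≠ 0 := pow_ne_zero _ hf1ne
    have hfbne : aeval sb f2 ^ b ≠ 0 := pow_ne_zero _ hf2ne
    rcases hk with hk0 | ⟨hk1, hn2'⟩
    · constructor
      · rw [hq, hk0]
        simp only [pow_zero, one_mul, map_mul, map_pow]
        rw [Polynomial.natDegree_mul hfane hfbne, hfa, hfb, hceq, hk0]
        ring
      · rw [hq, hk0]
        simp only [pow_zero, one_mul, map_mul, map_pow]
        exact mul_ne_zero hfane hfbne
    · -- k = 1, n ≥ 2
      have hp3 : aeval sb (f2^2 - f1^3) =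
          (Polynomial.C (-3:ℂ) * Polynomial.X ^ (2*n+2) + Polynomial.X ^ (2*d+2)
            + Polynomial.C (6:ℂ) * Polynomial.X ^ (n+d+2) - Polynomial.X ^ 3)
          + Polynomial.C (16:ℂ) * Polynomial.X ^ (3*n+d+1) := by
        rw [hexp]
        simp [sb, map_ofNat]
        ring
      have hppb : (Polynomial.C (-3:ℂ) * Polynomial.X ^ (2*n+2) + Polynomial.X ^ (2*d+2)
          + Polynomial.C (6:ℂ) * Polynomial.X ^ (n+d+2)
          - (Polynomial.X:Polynomial ℂ) ^ 3).natDegree < 3*n+d+1 := by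
        have h1 : (Polynomial.C (-3:ℂ) * Polynomial.X ^ (2*n+2)).natDegree ≤ 2*n+2 :=
          Polynomial.natDegree_C_mul_X_pow_le _ _
        have h2 : ((Polynomial.X:Polynomial ℂ) ^ (2*d+2)).natDegree ≤ 2*d+2 := by
          rw [Polynomial.natDegree_X_pow]
        have h3 : (Polynomial.C (6:ℂ) * Polynomial.X ^ (n+d+2)).natDegree ≤ n+d+2 :=
          Polynomial.natDegree_C_mul_X_pow_le _ _
        have h4 : ((Polynomial.X:Polynomial ℂ) ^ 3).natDegree ≤ 3 := by
          rw [Polynomial.natDegree_X_pow]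
        have e1 := Polynomial.natDegree_add_le (Polynomial.C (-3:ℂ) * Polynomial.X ^ (2*n+2))
          ((Polynomial.X:Polynomial ℂ) ^ (2*d+2))
        have e2 := Polynomial.natDegree_add_le (Polynomial.C (-3:ℂ) * Polynomial.X ^ (2*n+2)
          + Polynomial.X ^ (2*d+2)) (Polynomial.C (6:ℂ) * Polynomial.X ^ (n+d+2))
        have e3 := Polynomial.natDegree_sub_le (Polynomial.C (-3:ℂ) * Polynomial.X ^ (2*n+2)
          + Polynomial.X ^ (2*d+2) + Polynomial.C (6:ℂ) * Polynomial.X ^ (n+d+2))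
          ((Polynomial.X:Polynomial ℂ) ^ 3)
        omega
      have hn3 := ndh _ 16 (by norm_num) (3*n+d+1) hppb
      constructor
      · rw [hq, hk1]
        simp only [pow_one, map_mul, map_pow]
        rw [Polynomial.natDegree_mul (mul_ne_zero (by rw [hp3]; exact hn3.2) hfane) hfbne,
          Polynomial.natDegree_mul (by rw [hp3]; exact hn3.2) hfane]
        rw [hp3, hn3.1, hfa, hfb, hceq, hk1]
        ring
      · rw [hq, hk1]
        simp only [pow_one, map_mul, map_pow]
        exact mul_ne_zero (mul_ne_zero (by rw [hp3]; exact hn3.2) hfane) hfbne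
  -- f3 degree
  have hf3deg : (X 2 + q).totalDegree = c := by
    refine le_antisymm (tdle_add (le_trans (tdle_X 2) (by omega)) hqub) ?_
    have hlow := td_lower (X 2 + q)
    have : aeval sb ((X 2 : P3) + q) = Polynomial.X + aeval sb q := by
      simp [sb]
    rw [this, Polynomial.natDegree_add_eq_right_of_natDegree_lt
      (by rw [Polynomial.natDegree_X, hqdeg.1]; omega), hqdeg.1] at hlow
    exact hlow
  exact ⟨F, hTame, hAut, by
    simp only [mdeg3, hF0, hF1, hF2]
    rw [hf1deg, hf2deg, hf3deg]⟩

set_option maxHeartbeats 1000000 in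
lemma case25 (n c : ℕ) (hn : 1 ≤ n) (hc : 5*n < c) :
    ∃ F : PolyMap 3, IsTamePM F ∧ IsPolyAut F ∧ mdeg3 F = (2*n, 5*n, c) := by
  obtain ⟨k, d, a, b, hk, hd, hceq⟩ := arith2 n c hn hc
  have dA0 : degreeOf 0 ((64 : P3) * X 2 ^ (2*n)) = 0 :=
    dz_mul (dz_ofNat 0 64) (dz_pow (dz_X (by decide)) _)
  have dA1 : degreeOf 1 ((64 : P3) * X 2 ^ (2*n)) = 0 :=
    dz_mul (dz_ofNat 1 64) (dz_pow (dz_X (by decide)) _)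
  have dB1 : degreeOf 1 ((32768 : P3) * X 2 ^ (5*n) + 1280 * X 2 ^ (3*n) * X 0
      + 15 * X 2 ^ n * X 0 ^ 2 + X 0 * X 2 ^ d) = 0 :=
    dz_add (dz_add (dz_add (dz_mul (dz_ofNat 1 32768) (dz_pow (dz_X (by decide)) _))
      (dz_mul (dz_mul (dz_ofNat 1 1280) (dz_pow (dz_X (by decide)) _)) (dz_X (by decide))))
      (dz_mul (dz_mul (dz_ofNat 1 15) (dz_pow (dz_X (by decide)) _))
        (dz_pow (dz_X (by decide)) _)))
      (dz_mul (dz_X (by decide)) (dz_pow (dz_X (by decide)) _))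
  have dC2 : degreeOf 2 ((((X 1 : P3))^2 - (X 0 : P3)^5)^k * X 0 ^ a * X 1 ^ b) = 0 :=
    dz_mul (dz_mul (dz_pow (dz_sub (dz_pow (dz_X (by decide)) _)
      (dz_pow (dz_X (by decide)) _)) _) (dz_pow (dz_X (by decide)) _))
      (dz_pow (dz_X (by decide)) _)
  obtain ⟨F, hTame, hAut, hF0, hF1, hF2⟩ := master _ _ _ dA0 dA1 dB1 dC2
  set f1 : P3 := X 0 + (64 : P3) * X 2 ^ (2*n) with hf1
  set f2 : P3 := X 1 + ((32768 : P3) * X 2 ^ (5*n) + 1280 * X 2 ^ (3*n) * X 0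
      + 15 * X 2 ^ n * X 0 ^ 2 + X 0 * X 2 ^ d) with hf2
  set q : P3 := (f2^2 - f1^5)^k * f1^a * f2^b with hq
  have hqc : aeval ![f1, f2, X 2]
      ((((X 1 : P3))^2 - (X 0 : P3)^5)^k * X 0 ^ a * X 1 ^ b) = q := by
    simp only [map_mul, map_pow, map_sub, aeval_X, hq]
    norm_num [Matrix.cons_val_zero, Matrix.cons_val_one, Matrix.head_cons]
  rw [hqc] at hF2
  have hexp : f2^2 - f1^5 =
      X 1^2 + 65536 * X 1 * X 2^(5*n) + 2560 * X 1 * X 2^(3*n) * X 0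
        + 30 * X 1 * X 2^n * X 0^2 + 2 * X 1 * X 0 * X 2^d
        - 2560 * X 2^(4*n) * X 0^3 - 95 * X 2^(2*n) * X 0^4 - X 0^5
        + X 0^2 * X 2^(2*d) + 65536 * X 0 * X 2^(5*n+d)
        + 2560 * X 0^2 * X 2^(3*n+d) + 30 * X 0^3 * X 2^(n+d) := by
    rw [hf1, hf2]; ring
  have hf1ub : f1.totalDegree ≤ 2*n := by
    refine tdle_add (le_trans (tdle_X 0) (by omega)) ?_
    exact le_trans (tdle_mul (le_of_eq (tdle_ofNat 64)) (tdle_X_pow 2 (2*n))) (by omega)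
  have hf2ub : f2.totalDegree ≤ 5*n := by
    refine tdle_add (le_trans (tdle_X 1) (by omega))
      (tdle_add (tdle_add (tdle_add ?_ ?_) ?_) ?_)
    · exact le_trans (tdle_mul (le_of_eq (tdle_ofNat 32768)) (tdle_X_pow 2 (5*n))) (by omega)
    · exact le_trans (tdle_mul (tdle_mul (le_of_eq (tdle_ofNat 1280)) (tdle_X_pow 2 (3*n)))
        (tdle_X 0)) (by omega)
    · exact le_trans (tdle_mul (tdle_mul (le_of_eq (tdle_ofNat 15)) (tdle_X_pow 2 n))
        (tdle_X_pow 0 2)) (by omega)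
    · exact le_trans (tdle_mul (tdle_X 0) (tdle_X_pow 2 d)) (by omega)
  have hhub : 2 ≤ n → (f2^2 - f1^5).totalDegree ≤ 5*n+d+1 := by
    intro hn2'
    rw [hexp]
    refine tdle_add (tdle_add (tdle_add (tdle_add (tdle_sub (tdle_sub (tdle_sub (tdle_add
      (tdle_add (tdle_add (tdle_add ?_ ?_) ?_) ?_) ?_) ?_) ?_) ?_) ?_) ?_) ?_) ?_
    · exact le_trans (tdle_X_pow 1 2) (by omega)
    · exact le_trans (tdle_mul (tdle_mul (le_of_eq (tdle_ofNat 65536)) (tdle_X 1))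
        (tdle_X_pow 2 (5*n))) (by omega)
    · exact le_trans (tdle_mul (tdle_mul (tdle_mul (le_of_eq (tdle_ofNat 2560)) (tdle_X 1))
        (tdle_X_pow 2 (3*n))) (tdle_X 0)) (by omega)
    · exact le_trans (tdle_mul (tdle_mul (tdle_mul (le_of_eq (tdle_ofNat 30)) (tdle_X 1))
        (tdle_X_pow 2 n)) (tdle_X_pow 0 2)) (by omega)
    · exact le_trans (tdle_mul (tdle_mul (tdle_mul (le_of_eq (tdle_ofNat 2)) (tdle_X 1))
        (tdle_X 0)) (tdle_X_pow 2 d)) (by omega)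
    · exact le_trans (tdle_mul (tdle_mul (le_of_eq (tdle_ofNat 2560)) (tdle_X_pow 2 (4*n)))
        (tdle_X_pow 0 3)) (by omega)
    · exact le_trans (tdle_mul (tdle_mul (le_of_eq (tdle_ofNat 95)) (tdle_X_pow 2 (2*n)))
        (tdle_X_pow 0 4)) (by omega)
    · exact le_trans (tdle_X_pow 0 5) (by omega)
    · exact le_trans (tdle_mul (tdle_X_pow 0 2) (tdle_X_pow 2 (2*d))) (by omega)
    · exact le_trans (tdle_mul (tdle_mul (le_of_eq (tdle_ofNat 65536)) (tdle_X 0))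
        (tdle_X_pow 2 (5*n+d))) (by omega)
    · exact le_trans (tdle_mul (tdle_mul (le_of_eq (tdle_ofNat 2560)) (tdle_X_pow 0 2))
        (tdle_X_pow 2 (3*n+d))) (by omega)
    · exact le_trans (tdle_mul (tdle_mul (le_of_eq (tdle_ofNat 30)) (tdle_X_pow 0 3))
        (tdle_X_pow 2 (n+d))) (by omega)
  have hqub : q.totalDegree ≤ c := by
    rcases hk with hk0 | ⟨hk1, hn2'⟩
    · rw [hq, hk0, pow_zero, one_mul]
      refine le_trans (tdle_mul (tdle_pow hf1ub a) (tdle_pow hf2ub b)) (le_of_eq ?_)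
      rw [hceq, hk0]; ring
    · refine le_trans (tdle_mul (tdle_mul (tdle_pow (hhub hn2') k) (tdle_pow hf1ub a))
        (tdle_pow hf2ub b)) (le_of_eq ?_)
      rw [hceq]; ring
  have hp1 : aeval sb f1 = Polynomial.X + Polynomial.C (64:ℂ) * Polynomial.X ^ (2*n) := by
    simp [hf1, sb, map_ofNat]
  have hn1 := ndh Polynomial.X 64 (by norm_num) (2*n) (by rw [Polynomial.natDegree_X]; omega)
  have hf1deg : f1.totalDegree = 2*n := by
    refine le_antisymm hf1ub ?_
    have := td_lower f1
    rw [hp1, hn1.1] at this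
    exact this
  have hf1ne : aeval sb f1 ≠ 0 := by rw [hp1]; exact hn1.2
  have hp2 : aeval sb f2 = (Polynomial.C (1280:ℂ) * Polynomial.X ^ (3*n+1)
      + Polynomial.C (15:ℂ) * Polynomial.X ^ (n+2) + Polynomial.X ^ (d+1))
      + Polynomial.C (32768:ℂ) * Polynomial.X ^ (5*n) := by
    simp [hf2, sb, map_ofNat]
    ring
  have hn2 := ndh (Polynomial.C (1280:ℂ) * Polynomial.X ^ (3*n+1)
      + Polynomial.C (15:ℂ) * Polynomial.X ^ (n+2) + Polynomial.X ^ (d+1)) 32768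
    (by norm_num) (5*n) (by
      have h1 : (Polynomial.C (1280:ℂ) * Polynomial.X ^ (3*n+1)).natDegree ≤ 3*n+1 :=
        Polynomial.natDegree_C_mul_X_pow_le _ _
      have h2 : (Polynomial.C (15:ℂ) * Polynomial.X ^ (n+2)).natDegree ≤ n+2 :=
        Polynomial.natDegree_C_mul_X_pow_le _ _
      have h3 : ((Polynomial.X : Polynomial ℂ) ^ (d+1)).natDegree ≤ d+1 := by
        rw [Polynomial.natDegree_X_pow]
      have e1 := Polynomial.natDegree_add_le (Polynomial.C (1280:ℂ) * Polynomial.X ^ (3*n+1))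
        (Polynomial.C (15:ℂ) * Polynomial.X ^ (n+2))
      have e2 := Polynomial.natDegree_add_le (Polynomial.C (1280:ℂ) * Polynomial.X ^ (3*n+1)
        + Polynomial.C (15:ℂ) * Polynomial.X ^ (n+2)) ((Polynomial.X : Polynomial ℂ) ^ (d+1))
      omega)
  have hf2deg : f2.totalDegree = 5*n := by
    refine le_antisymm hf2ub ?_
    have := td_lower f2
    rw [hp2, hn2.1] at this
    exact this
  have hf2ne : aeval sb f2 ≠ 0 := by rw [hp2]; exact hn2.2
  have hqdeg : (aeval sb q).natDegree = c ∧ aeval sb q ≠ 0 := by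
    have hfa : (aeval sb f1 ^ a).natDegree = a * (2*n) := by
      rw [Polynomial.natDegree_pow, hp1, hn1.1]
    have hfb : (aeval sb f2 ^ b).natDegree = b * (5*n) := by
      rw [Polynomial.natDegree_pow, hp2, hn2.1]
    have hfane : aeval sb f1 ^ a ≠ 0 := pow_ne_zero _ hf1ne
    have hfbne : aeval sb f2 ^ b ≠ 0 := pow_ne_zero _ hf2ne
    rcases hk with hk0 | ⟨hk1, hn2'⟩
    · constructor
      · rw [hq, hk0]
        simp only [pow_zero, one_mul, map_mul, map_pow]
        rw [Polynomial.natDegree_mul hfane hfbne, hfa, hfb, hceq, hk0]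
        ring
      · rw [hq, hk0]
        simp only [pow_zero, one_mul, map_mul, map_pow]
        exact mul_ne_zero hfane hfbne
    · -- k = 1, n ≥ 2
      have hp3 : aeval sb (f2^2 - f1^5) =
          (Polynomial.C (-95:ℂ) * Polynomial.X ^ (2*n+4) - Polynomial.X ^ 5
            + Polynomial.X ^ (2*d+2) + Polynomial.C (2560:ℂ) * Polynomial.X ^ (3*n+d+2)
            + Polynomial.C (30:ℂ) * Polynomial.X ^ (n+d+3))
          + Polynomial.C (-2560:ℂ) * Polynomial.X ^ (4*n+3)
          + Polynomial.C (65536:ℂ) * Polynomial.X ^ (5*n+d+1) := by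
        rw [hexp]
        simp [sb, map_ofNat]
        ring
      have hppb : (Polynomial.C (-95:ℂ) * Polynomial.X ^ (2*n+4) - Polynomial.X ^ 5
          + Polynomial.X ^ (2*d+2) + Polynomial.C (2560:ℂ) * Polynomial.X ^ (3*n+d+2)
          + Polynomial.C (30:ℂ) * Polynomial.X ^ (n+d+3)).natDegree ≤ 3*n+d+2 := by
        have h1 : (Polynomial.C (-95:ℂ) * Polynomial.X ^ (2*n+4)).natDegree ≤ 2*n+4 :=
          Polynomial.natDegree_C_mul_X_pow_le _ _
        have h2 : ((Polynomial.X:Polynomial ℂ) ^ 5).natDegree ≤ 5 := by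
          rw [Polynomial.natDegree_X_pow]
        have h3 : ((Polynomial.X:Polynomial ℂ) ^ (2*d+2)).natDegree ≤ 2*d+2 := by
          rw [Polynomial.natDegree_X_pow]
        have h4 : (Polynomial.C (2560:ℂ) * Polynomial.X ^ (3*n+d+2)).natDegree ≤ 3*n+d+2 :=
          Polynomial.natDegree_C_mul_X_pow_le _ _
        have h5 : (Polynomial.C (30:ℂ) * Polynomial.X ^ (n+d+3)).natDegree ≤ n+d+3 :=
          Polynomial.natDegree_C_mul_X_pow_le _ _
        have e1 := Polynomial.natDegree_sub_le (Polynomial.C (-95:ℂ) * Polynomial.X ^ (2*n+4))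
          ((Polynomial.X:Polynomial ℂ) ^ 5)
        have e2 := Polynomial.natDegree_add_le (Polynomial.C (-95:ℂ) * Polynomial.X ^ (2*n+4)
          - Polynomial.X ^ 5) ((Polynomial.X:Polynomial ℂ) ^ (2*d+2))
        have e3 := Polynomial.natDegree_add_le (Polynomial.C (-95:ℂ) * Polynomial.X ^ (2*n+4)
          - Polynomial.X ^ 5 + Polynomial.X ^ (2*d+2))
          (Polynomial.C (2560:ℂ) * Polynomial.X ^ (3*n+d+2))
        have e4 := Polynomial.natDegree_add_le (Polynomial.C (-95:ℂ) * Polynomial.X ^ (2*n+4)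
          - Polynomial.X ^ 5 + Polynomial.X ^ (2*d+2)
          + Polynomial.C (2560:ℂ) * Polynomial.X ^ (3*n+d+2))
          (Polynomial.C (30:ℂ) * Polynomial.X ^ (n+d+3))
        omega
      have hφh : (aeval sb (f2^2 - f1^5)).natDegree = 5*n+d+1 ∧ aeval sb (f2^2 - f1^5) ≠ 0 := by
        by_cases hnd2 : n + d = 2
        · have hcomb : Polynomial.C (-2560:ℂ) * Polynomial.X ^ (4*n+3)
              + Polynomial.C (65536:ℂ) * Polynomial.X ^ (5*n+d+1)
              = Polynomial.C (62976:ℂ) * Polynomial.X ^ (5*n+d+1) := by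
            rw [show (4*n+3 : ℕ) = 5*n+d+1 by omega, ← add_mul, ← Polynomial.C_add]
            norm_num
          rw [hp3, add_assoc, hcomb]
          exact ndh _ 62976 (by norm_num) (5*n+d+1) (by omega)
        · have hp'b : (Polynomial.C (-95:ℂ) * Polynomial.X ^ (2*n+4) - Polynomial.X ^ 5
              + Polynomial.X ^ (2*d+2) + Polynomial.C (2560:ℂ) * Polynomial.X ^ (3*n+d+2)
              + Polynomial.C (30:ℂ) * Polynomial.X ^ (n+d+3)
              + Polynomial.C (-2560:ℂ) * Polynomial.X ^ (4*n+3)).natDegree < 5*n+d+1 := by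
            have h6 : (Polynomial.C (-2560:ℂ) * Polynomial.X ^ (4*n+3)).natDegree ≤ 4*n+3 :=
              Polynomial.natDegree_C_mul_X_pow_le _ _
            have e5 := Polynomial.natDegree_add_le (Polynomial.C (-95:ℂ) * Polynomial.X ^ (2*n+4)
              - Polynomial.X ^ 5 + Polynomial.X ^ (2*d+2)
              + Polynomial.C (2560:ℂ) * Polynomial.X ^ (3*n+d+2)
              + Polynomial.C (30:ℂ) * Polynomial.X ^ (n+d+3))
              (Polynomial.C (-2560:ℂ) * Polynomial.X ^ (4*n+3))
            omega
          rw [hp3]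
          exact ndh _ 65536 (by norm_num) (5*n+d+1) hp'b
      constructor
      · rw [hq, hk1]
        simp only [pow_one, map_mul, map_pow]
        rw [Polynomial.natDegree_mul (mul_ne_zero hφh.2 hfane) hfbne,
          Polynomial.natDegree_mul hφh.2 hfane, hφh.1, hfa, hfb, hceq, hk1]
        ring
      · rw [hq, hk1]
        simp only [pow_one, map_mul, map_pow]
        exact mul_ne_zero (mul_ne_zero hφh.2 hfane) hfbne
  have hf3deg : (X 2 + q).totalDegree = c := by
    refine le_antisymm (tdle_add (le_trans (tdle_X 2) (by omega)) hqub) ?_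
    have hlow := td_lower (X 2 + q)
    have : aeval sb ((X 2 : P3) + q) = Polynomial.X + aeval sb q := by
      simp [sb]
    rw [this, Polynomial.natDegree_add_eq_right_of_natDegree_lt
      (by rw [Polynomial.natDegree_X, hqdeg.1]; omega), hqdeg.1] at hlow
    exact hlow
  exact ⟨F, hTame, hAut, by
    simp only [mdeg3, hF0, hF1, hF2]
    rw [hf1deg, hf2deg, hf3deg]⟩

theorem stmt16 (n : ℕ) (hn : 0 < n) :
    (∀ c : ℕ, 3 * n < c →
      ∃ F : PolyMap 3, IsTamePM F ∧ IsPolyAut F ∧ mdeg3 F = (2 * n, 3 * n, c)) ∧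
    (∀ c : ℕ, 5 * n < c →
      ∃ F : PolyMap 3, IsTamePM F ∧ IsPolyAut F ∧ mdeg3 F = (2 * n, 5 * n, c)) := by
  exact ⟨fun c hc => case23 n c hn hc, fun c hc => case25 n c hn hc⟩
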